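/- Let G be a bipartite simple graph with bipartition (A, B) and let k be a positive integer. Construct G' from G by adding two new vertex-disjoint (k,k)-bicliques G_1 (with bipartition (A_1, B_1)) and G_2 (with bipartition (A_2, B_2)), together with all edges between each vertex of B_1 and each vertex of A, and all edges between each vertex of B and each vertex of A_2. Let V_s = V(G_1) and V_t = V(G_2). Then G contains a (k,k)-biclique as a subgraph if and only if there is a sequence of TJ steps in G' transforming V_s into V_t in which every intermediate vertex subset induces a subgraph of G' containing a spanning (k,k)-biclique. -/

import Mathlib

namespace Stmt18

/-- The vertex type of `G'`: the vertices of `G` plus the vertices of the two new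
`(k,k)`-bicliques `G_1` (parts `A_1`, `B_1`) and `G_2` (parts `A_2`, `B_2`). -/
abbrev Wt (V : Type*) (k : ℕ) := V ⊕ ((Fin k ⊕ Fin k) ⊕ (Fin k ⊕ Fin k))

variable {V : Type*}

/-- A vertex of `A_1`. -/
def vA1 {k : ℕ} (a : Fin k) : Wt V k := Sum.inr (Sum.inl (Sum.inl a))

/-- A vertex of `B_1`. -/
def vB1 {k : ℕ} (b : Fin k) : Wt V k := Sum.inr (Sum.inl (Sum.inr b))

/-- A vertex of `A_2`. -/
def vA2 {k : ℕ} (a : Fin k) : Wt V k := Sum.inr (Sum.inr (Sum.inl a))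

/-- A vertex of `B_2`. -/
def vB2 {k : ℕ} (b : Fin k) : Wt V k := Sum.inr (Sum.inr (Sum.inr b))

/-- The graph `G'`: `G` together with the two new `(k,k)`-bicliques `G_1` and `G_2`,
all edges between `B_1` and `A`, and all edges between `B` and `A_2`. -/
def newG (G : SimpleGraph V) (k : ℕ) (A B : Set V) : SimpleGraph (Wt V k) :=
  SimpleGraph.fromEdgeSet
    (Sym2.map Sum.inl '' G.edgeSet ∪
      {e | ∃ a b : Fin k, e = s(vA1 a, vB1 b)} ∪
      {e | ∃ a b : Fin k, e = s(vA2 a, vB2 b)} ∪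
      {e | ∃ (b : Fin k) (u : V), u ∈ A ∧ e = s(vB1 b, Sum.inl u)} ∪
      {e | ∃ (u : V) (a : Fin k), u ∈ B ∧ e = s(Sum.inl u, vA2 a)})

/-- `W` is a feasible solution of the spanning variant for the `(k,k)`-biclique property:
`W` is the disjoint union of two `k`-sets with every vertex of one adjacent to every
vertex of the other, i.e. `G[W]` contains a spanning `(k,k)`-biclique. -/
def SpanBiclique {α : Type*} (G : SimpleGraph α) (k : ℕ) (W : Set α) : Prop :=
  ∃ X Y : Set α, Disjoint X Y ∧ X ∪ Y = W ∧ X.ncard = k ∧ Y.ncard = k ∧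
    ∀ x ∈ X, ∀ y ∈ Y, G.Adj x y

/-- A single token-jumping (TJ) step on vertex subsets. -/
def TJStepV {α : Type*} (V1 V2 : Set α) : Prop :=
  ∃ u v, u ∈ V1 ∧ v ∉ V1 ∧ V2 = (V1 \ {u}) ∪ {v}

/-- There is a sequence of TJ steps from `Ws` to `Wt` in which every vertex subset
satisfies the property `P`. -/
def TJReachV {α : Type*} (P : Set α → Prop) (Ws Wt : Set α) : Prop :=
  ∃ (l : ℕ) (f : ℕ → Set α), f 0 = Ws ∧ f l = Wt ∧
    (∀ k ≤ l, P (f k)) ∧ ∀ k < l, TJStepV (f k) (f (k + 1))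

section TJ
variable {α : Type*}

lemma tjreach_cons (P : Set α → Prop) {a b c : Set α} (hstep : TJStepV a b) (ha : P a)
    (h : TJReachV P b c) : TJReachV P a c := by
  obtain ⟨l, f, h0, hl, hP, hs⟩ := h
  refine ⟨l + 1, fun i => match i with | 0 => a | n + 1 => f n, rfl, hl, ?_, ?_⟩
  · intro i hi
    match i with
    | 0 => exact ha
    | n + 1 => exact hP n (by omega)
  · intro i hi
    match i with
    | 0 => simpa [h0] using hstep
    | n + 1 => exact hs n (by omega)

lemma tjreach_trans (P : Set α → Prop) {a b c : Set α} (h1 : TJReachV P a b)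
    (h2 : TJReachV P b c) : TJReachV P a c := by
  obtain ⟨l, f, h0, hl, hP, hs⟩ := h1
  induction l generalizing a f with
  | zero => rw [← h0, hl]; exact h2
  | succ n ih =>
    refine tjreach_cons P (h0 ▸ hs 0 (by omega)) (h0 ▸ hP 0 (by omega))
      (ih (fun i => f (i + 1)) rfl hl (fun i hi => hP (i + 1) (by omega))
        (fun i hi => hs (i + 1) (by omega)))

lemma tjreach_move (P : Set α → Prop) :
    ∀ (n : ℕ) (S T T' : Set α), Disjoint T T' → Disjoint S (T ∪ T') →
    T.Finite → T'.Finite → T.ncard = n → T'.ncard = n →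
    (∀ U U' : Set α, U ⊆ T → U' ⊆ T' → U.ncard + U'.ncard = n → P (S ∪ (U ∪ U'))) →
    TJReachV P (S ∪ T) (S ∪ T') := by
  intro n
  induction n with
  | zero =>
    intro S T T' _ _ hTf hT'f hT hT' hP
    rw [(Set.ncard_eq_zero hTf).mp hT, (Set.ncard_eq_zero hT'f).mp hT']
    exact ⟨0, fun _ => S ∪ ∅, rfl, rfl, fun _ _ => by simpa using hP ∅ ∅ (by simp) (by simp) (by simp),
      fun k hk => absurd hk (Nat.not_lt_zero k)⟩
  | succ n ih =>
    intro S T T' hTT' hS hTf hT'f hT hT' hP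
    obtain ⟨t, ht⟩ : T.Nonempty := Set.nonempty_of_ncard_ne_zero (by omega)
    obtain ⟨t', ht'⟩ : T'.Nonempty := Set.nonempty_of_ncard_ne_zero (by omega)
    have htS : t ∉ S := fun h => (hS.le_bot ⟨h, Or.inl ht⟩)
    have ht'S : t' ∉ S := fun h => (hS.le_bot ⟨h, Or.inr ht'⟩)
    have ht'T : t' ∉ T := fun h => (hTT'.le_bot ⟨h, ht'⟩)
    have hstep : TJStepV (S ∪ T) ((S ∪ {t'}) ∪ (T \ {t})) := by
      refine ⟨t, t', Or.inr ht, by simp [htS, ht'T, ht'S, Set.mem_union], ?_⟩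
      ext x
      simp only [Set.mem_union, Set.mem_diff, Set.mem_singleton_iff]
      constructor
      · rintro ((h | h) | ⟨h1, h2⟩)
        · exact Or.inl ⟨Or.inl h, fun e => htS (e ▸ h)⟩
        · exact Or.inr h
        · exact Or.inl ⟨Or.inr h1, h2⟩
      · rintro (⟨(h | h), hne⟩ | h)
        · exact Or.inl (Or.inl h)
        · exact Or.inr ⟨h, hne⟩
        · exact Or.inl (Or.inr h)
    have hrest : TJReachV P ((S ∪ {t'}) ∪ (T \ {t})) ((S ∪ {t'}) ∪ (T' \ {t'})) := by
      refine ih (S ∪ {t'}) (T \ {t}) (T' \ {t'})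
        (hTT'.mono Set.diff_subset Set.diff_subset)
        ?_ (hTf.diff) (hT'f.diff)
        (by rw [Set.ncard_diff_singleton_of_mem ht]; omega)
        (by rw [Set.ncard_diff_singleton_of_mem ht']; omega) ?_
      · refine Set.disjoint_union_left.mpr ⟨hS.mono_right (Set.union_subset_union Set.diff_subset Set.diff_subset), ?_⟩
        simp [Set.disjoint_singleton_left, ht'T]
      · intro U U' hU hU' hcard
        have ht'U' : t' ∉ U' := fun h => (hU' h).2 rfl
        have : (S ∪ {t'}) ∪ (U ∪ U') = S ∪ (U ∪ (U' ∪ {t'})) := by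
          ext x; simp only [Set.mem_union]; tauto
        rw [this]
        refine hP U (U' ∪ {t'}) (hU.trans Set.diff_subset) ?_ ?_
        · rw [Set.union_subset_iff]; exact ⟨hU'.trans Set.diff_subset, by simpa using ht'⟩
        · rw [Set.union_comm, Set.singleton_union,
            Set.ncard_insert_of_notMem ht'U' ((hT'f.diff).subset hU')]
          omega
    have hend : (S ∪ {t'}) ∪ (T' \ {t'}) = S ∪ T' := by
      ext x
      simp only [Set.mem_union, Set.mem_diff, Set.mem_singleton_iff]
      constructor
      · rintro ((h | h) | h)
        · exact Or.inl h
        · exact Or.inr (h ▸ ht')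
        · exact Or.inr h.1
      · rintro (h | h)
        · exact Or.inl (Or.inl h)
        · by_cases hx : x = t'
          · exact Or.inl (Or.inr hx)
          · exact Or.inr ⟨h, hx⟩
    rw [← hend]
    exact tjreach_cons P hstep (by simpa using hP T ∅ le_rfl (by simp) (by simp [hT])) hrest

end TJ
section Adj
variable {k : ℕ} {G : SimpleGraph V} {A B : Set V}

lemma vA1_inj : Function.Injective (vA1 (V := V) (k := k)) := by
  intro a b h; simpa [vA1] using h
lemma vB1_inj : Function.Injective (vB1 (V := V) (k := k)) := by
  intro a b h; simpa [vB1] using h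
lemma vA2_inj : Function.Injective (vA2 (V := V) (k := k)) := by
  intro a b h; simpa [vA2] using h
lemma vB2_inj : Function.Injective (vB2 (V := V) (k := k)) := by
  intro a b h; simpa [vB2] using h

lemma ncard_range_of_inj {β γ : Type*} [Fintype β] {f : β → γ} (hf : Function.Injective f) :
    (Set.range f).ncard = Fintype.card β := by
  rw [← Set.image_univ, Set.ncard_image_of_injective _ hf, Set.ncard_univ, Nat.card_eq_fintype_card]

lemma newG_adj {x y : Wt V k} :
    (newG G k A B).Adj x y ↔
      (∃ u v, G.Adj u v ∧ x = Sum.inl u ∧ y = Sum.inl v) ∨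
      (∃ a b, x = vA1 a ∧ y = vB1 b) ∨ (∃ a b, x = vB1 b ∧ y = vA1 a) ∨
      (∃ a b, x = vA2 a ∧ y = vB2 b) ∨ (∃ a b, x = vB2 b ∧ y = vA2 a) ∨
      (∃ b u, u ∈ A ∧ x = vB1 b ∧ y = Sum.inl u) ∨
      (∃ b u, u ∈ A ∧ x = Sum.inl u ∧ y = vB1 b) ∨
      (∃ u a, u ∈ B ∧ x = Sum.inl u ∧ y = vA2 a) ∨
      (∃ u a, u ∈ B ∧ x = vA2 a ∧ y = Sum.inl u) := by
  rw [newG, SimpleGraph.fromEdgeSet_adj]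
  constructor
  · rintro ⟨hmem, hne⟩
    simp only [Set.mem_union, Set.mem_image, Set.mem_setOf_eq] at hmem
    rcases hmem with ((((⟨e, he, hme⟩ | ⟨a, b, he⟩) | ⟨a, b, he⟩) | ⟨b, u, hu, he⟩) | ⟨u, a, hu, he⟩)
    · induction e using Sym2.ind with
      | _ u v =>
        rw [Sym2.map_pair_eq, Sym2.eq_iff] at hme
        rw [SimpleGraph.mem_edgeSet] at he
        rcases hme with ⟨h1, h2⟩ | ⟨h1, h2⟩
        · exact Or.inl ⟨u, v, he, h1.symm, h2.symm⟩
        · exact Or.inl ⟨v, u, he.symm, h2.symm, h1.symm⟩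
    · rw [Sym2.eq_iff] at he
      rcases he with ⟨h1, h2⟩ | ⟨h1, h2⟩
      · exact Or.inr (Or.inl ⟨a, b, h1, h2⟩)
      · exact Or.inr (Or.inr (Or.inl ⟨a, b, h1, h2⟩))
    · rw [Sym2.eq_iff] at he
      rcases he with ⟨h1, h2⟩ | ⟨h1, h2⟩
      · exact Or.inr (Or.inr (Or.inr (Or.inl ⟨a, b, h1, h2⟩)))
      · exact Or.inr (Or.inr (Or.inr (Or.inr (Or.inl ⟨a, b, h1, h2⟩))))
    · rw [Sym2.eq_iff] at he
      rcases he with ⟨h1, h2⟩ | ⟨h1, h2⟩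
      · exact Or.inr (Or.inr (Or.inr (Or.inr (Or.inr (Or.inl ⟨b, u, hu, h1, h2⟩)))))
      · exact Or.inr (Or.inr (Or.inr (Or.inr (Or.inr (Or.inr (Or.inl ⟨b, u, hu, h1, h2⟩))))))
    · rw [Sym2.eq_iff] at he
      rcases he with ⟨h1, h2⟩ | ⟨h1, h2⟩
      · exact Or.inr (Or.inr (Or.inr (Or.inr (Or.inr (Or.inr (Or.inr (Or.inl ⟨u, a, hu, h1, h2⟩)))))))
      · exact Or.inr (Or.inr (Or.inr (Or.inr (Or.inr (Or.inr (Or.inr (Or.inr ⟨u, a, hu, h1, h2⟩)))))))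
  · intro h
    constructor
    · simp only [Set.mem_union, Set.mem_image, Set.mem_setOf_eq]
      rcases h with ⟨u, v, ha, rfl, rfl⟩ | ⟨a, b, rfl, rfl⟩ | ⟨a, b, rfl, rfl⟩ | ⟨a, b, rfl, rfl⟩ |
        ⟨a, b, rfl, rfl⟩ | ⟨b, u, hu, rfl, rfl⟩ | ⟨b, u, hu, rfl, rfl⟩ | ⟨u, a, hu, rfl, rfl⟩ |
        ⟨u, a, hu, rfl, rfl⟩
      · exact Or.inl (Or.inl (Or.inl (Or.inl ⟨s(u, v), ha, by rw [Sym2.map_pair_eq]⟩)))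
      · exact Or.inl (Or.inl (Or.inl (Or.inr ⟨a, b, rfl⟩)))
      · exact Or.inl (Or.inl (Or.inl (Or.inr ⟨a, b, Sym2.eq_swap⟩)))
      · exact Or.inl (Or.inl (Or.inr ⟨a, b, rfl⟩))
      · exact Or.inl (Or.inl (Or.inr ⟨a, b, Sym2.eq_swap⟩))
      · exact Or.inl (Or.inr ⟨b, u, hu, rfl⟩)
      · exact Or.inl (Or.inr ⟨b, u, hu, Sym2.eq_swap⟩)
      · exact Or.inr ⟨u, a, hu, rfl⟩
      · exact Or.inr ⟨u, a, hu, Sym2.eq_swap⟩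
    · rcases h with ⟨u, v, ha, rfl, rfl⟩ | ⟨a, b, rfl, rfl⟩ | ⟨a, b, rfl, rfl⟩ | ⟨a, b, rfl, rfl⟩ |
        ⟨a, b, rfl, rfl⟩ | ⟨b, u, hu, rfl, rfl⟩ | ⟨b, u, hu, rfl, rfl⟩ | ⟨u, a, hu, rfl, rfl⟩ |
        ⟨u, a, hu, rfl, rfl⟩ <;>
        simp [vA1, vB1, vA2, vB2] <;> exact ha.ne

lemma adj_vA1_iff {a : Fin k} {y : Wt V k} :
    (newG G k A B).Adj (vA1 a) y ↔ ∃ b, y = vB1 b := by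
  rw [newG_adj]
  constructor
  · rintro (⟨u, v, -, h, -⟩ | ⟨a', b, h1, h2⟩ | ⟨a', b, h1, h2⟩ | ⟨a', b, h1, h2⟩ |
      ⟨a', b, h1, h2⟩ | ⟨b, u, -, h1, h2⟩ | ⟨b, u, -, h1, h2⟩ | ⟨u, a', -, h1, h2⟩ |
      ⟨u, a', -, h1, h2⟩) <;> first
      |exact ⟨_, h2⟩
      | (simp [vA1, vB1, vA2, vB2] at h; done)
      | (simp [vA1, vB1, vA2, vB2] at h1; done)
  · rintro ⟨b, rfl⟩
    exact Or.inr (Or.inl ⟨a, b, rfl, rfl⟩)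

lemma adj_vB1_iff {b : Fin k} {y : Wt V k} :
    (newG G k A B).Adj (vB1 b) y ↔ (∃ a, y = vA1 a) ∨ ∃ u ∈ A, y = Sum.inl u := by
  rw [newG_adj]
  constructor
  · rintro (⟨u, v, -, h, -⟩ | ⟨a', b', h1, h2⟩ | ⟨a', b', h1, h2⟩ | ⟨a', b', h1, h2⟩ |
      ⟨a', b', h1, h2⟩ | ⟨b', u, hu, h1, h2⟩ | ⟨b', u, hu, h1, h2⟩ | ⟨u, a', hu, h1, h2⟩ |
      ⟨u, a', hu, h1, h2⟩) <;> first
      | exact Or.inl ⟨_, h2⟩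
      | exact Or.inr ⟨u, hu, h2⟩
      | (simp [vA1, vB1, vA2, vB2] at h; done)
      | (simp [vA1, vB1, vA2, vB2] at h1; done)
  · rintro (⟨a, rfl⟩ | ⟨u, hu, rfl⟩)
    · exact Or.inr (Or.inr (Or.inl ⟨a, b, rfl, rfl⟩))
    · exact Or.inr (Or.inr (Or.inr (Or.inr (Or.inr (Or.inl ⟨b, u, hu, rfl, rfl⟩)))))

lemma adj_vA2_iff {a : Fin k} {y : Wt V k} :
    (newG G k A B).Adj (vA2 a) y ↔ (∃ b, y = vB2 b) ∨ ∃ u ∈ B, y = Sum.inl u := by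
  rw [newG_adj]
  constructor
  · rintro (⟨u, v, -, h, -⟩ | ⟨a', b', h1, h2⟩ | ⟨a', b', h1, h2⟩ | ⟨a', b', h1, h2⟩ |
      ⟨a', b', h1, h2⟩ | ⟨b', u, hu, h1, h2⟩ | ⟨b', u, hu, h1, h2⟩ | ⟨u, a', hu, h1, h2⟩ |
      ⟨u, a', hu, h1, h2⟩) <;> first
      | exact Or.inl ⟨_, h2⟩
      | exact Or.inr ⟨u, hu, h2⟩
      | (simp [vA1, vB1, vA2, vB2] at h; done)
      | (simp [vA1, vB1, vA2, vB2] at h1; done)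
  · rintro (⟨b, rfl⟩ | ⟨u, hu, rfl⟩)
    · exact Or.inr (Or.inr (Or.inr (Or.inl ⟨a, b, rfl, rfl⟩)))
    · exact Or.inr (Or.inr (Or.inr (Or.inr (Or.inr (Or.inr (Or.inr (Or.inr ⟨u, a, hu, rfl, rfl⟩)))))))

lemma adj_vB2_iff {b : Fin k} {y : Wt V k} :
    (newG G k A B).Adj (vB2 b) y ↔ ∃ a, y = vA2 a := by
  rw [newG_adj]
  constructor
  · rintro (⟨u, v, -, h, -⟩ | ⟨a', b', h1, h2⟩ | ⟨a', b', h1, h2⟩ | ⟨a', b', h1, h2⟩ |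
      ⟨a', b', h1, h2⟩ | ⟨b', u, hu, h1, h2⟩ | ⟨b', u, hu, h1, h2⟩ | ⟨u, a', hu, h1, h2⟩ |
      ⟨u, a', hu, h1, h2⟩) <;> first
      | exact ⟨_, h2⟩
      | (simp [vA1, vB1, vA2, vB2] at h; done)
      | (simp [vA1, vB1, vA2, vB2] at h1; done)
  · rintro ⟨a, rfl⟩
    exact Or.inr (Or.inr (Or.inr (Or.inr (Or.inl ⟨a, b, rfl, rfl⟩))))

lemma adj_inl_inl_iff {u v : V} :
    (newG G k A B).Adj (Sum.inl u) (Sum.inl v) ↔ G.Adj u v := by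
  rw [newG_adj]
  constructor
  · rintro (⟨u', v', ha, h1, h2⟩ | ⟨a', b', h1, h2⟩ | ⟨a', b', h1, h2⟩ | ⟨a', b', h1, h2⟩ |
      ⟨a', b', h1, h2⟩ | ⟨b', u', hu, h1, h2⟩ | ⟨b', u', hu, h1, h2⟩ | ⟨u', a', hu, h1, h2⟩ |
      ⟨u', a', hu, h1, h2⟩) <;> first
      | (obtain rfl : u = u' := by simpa using h1
         obtain rfl : v = v' := by simpa using h2
         exact ha)
      | (simp [vA1, vB1, vA2, vB2] at h1; done)
      | (simp [vA1, vB1, vA2, vB2] at h2; done)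
  · intro h
    exact Or.inl ⟨u, v, h, rfl, rfl⟩

end Adj
lemma spanb_elim {α : Type*} {H : SimpleGraph α} {k : ℕ} {W : Set α} {z : α}
    (h : SpanBiclique H k W) (hz : z ∈ W) :
    ∃ X Y : Set α, Disjoint X Y ∧ X ∪ Y = W ∧ X.ncard = k ∧ Y.ncard = k ∧
      (∀ x ∈ X, ∀ y ∈ Y, H.Adj x y) ∧ z ∈ X := by
  obtain ⟨X, Y, hd, hu, hX, hY, hadj⟩ := h
  have hz' : z ∈ X ∪ Y := by rw [hu]; exact hz
  rcases hz' with hzX | hzY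
  · exact ⟨X, Y, hd, hu, hX, hY, hadj, hzX⟩
  · exact ⟨Y, X, hd.symm, by rw [Set.union_comm]; exact hu, hY, hX,
      fun y hy x hx => (hadj x hx y hy).symm, hzY⟩

theorem stmt18 [Fintype V] [DecidableEq V] (G : SimpleGraph V) (k : ℕ) (hk : 1 ≤ k)
    (A B : Set V) (hdisj : Disjoint A B) (hcover : A ∪ B = Set.univ)
    (hbip : ∀ u v, G.Adj u v → (u ∈ A ∧ v ∈ B) ∨ (u ∈ B ∧ v ∈ A)) :
    (∃ X Y : Set V, Disjoint X Y ∧ X.ncard = k ∧ Y.ncard = k ∧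
        ∀ x ∈ X, ∀ y ∈ Y, G.Adj x y) ↔
      TJReachV (SpanBiclique (newG G k A B) k)
        (Set.range (vA1 (V := V)) ∪ Set.range (vB1 (V := V)))
        (Set.range (vA2 (V := V)) ∪ Set.range (vB2 (V := V))) := by
  classical
  set G' := newG G k A B with hG'
  set I : Set (Wt V k) := Set.range (Sum.inl : V → Wt V k) with hI
  set R1a : Set (Wt V k) := Set.range vA1 with hR1a
  set R1b : Set (Wt V k) := Set.range vB1 with hR1b
  set R2a : Set (Wt V k) := Set.range vA2 with hR2a
  set R2b : Set (Wt V k) := Set.range vB2 with hR2b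
  have hcR1a : R1a.ncard = k := by
    rw [hR1a, ncard_range_of_inj vA1_inj, Fintype.card_fin]
  have hcR1b : R1b.ncard = k := by
    rw [hR1b, ncard_range_of_inj vB1_inj, Fintype.card_fin]
  have hcR2a : R2a.ncard = k := by
    rw [hR2a, ncard_range_of_inj vA2_inj, Fintype.card_fin]
  have hcR2b : R2b.ncard = k := by
    rw [hR2b, ncard_range_of_inj vB2_inj, Fintype.card_fin]
  have hfR1a : R1a.Finite := Set.finite_range _
  have hfR1b : R1b.Finite := Set.finite_range _
  have hfR2a : R2a.Finite := Set.finite_range _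
  have hfR2b : R2b.Finite := Set.finite_range _
  have dI1a : Disjoint I R1a := by
    rw [Set.disjoint_left]; rintro _ ⟨u, rfl⟩ ⟨a, ha⟩; simp [vA1] at ha
  have dI1b : Disjoint I R1b := by
    rw [Set.disjoint_left]; rintro _ ⟨u, rfl⟩ ⟨a, ha⟩; simp [vB1] at ha
  have dI2a : Disjoint I R2a := by
    rw [Set.disjoint_left]; rintro _ ⟨u, rfl⟩ ⟨a, ha⟩; simp [vA2] at ha
  have dI2b : Disjoint I R2b := by
    rw [Set.disjoint_left]; rintro _ ⟨u, rfl⟩ ⟨a, ha⟩; simp [vB2] at ha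
  have d1a1b : Disjoint R1a R1b := by
    rw [Set.disjoint_left]; rintro _ ⟨a, rfl⟩ ⟨b, hb⟩; simp [vA1, vB1] at hb
  have d1a2a : Disjoint R1a R2a := by
    rw [Set.disjoint_left]; rintro _ ⟨a, rfl⟩ ⟨b, hb⟩; simp [vA1, vA2] at hb
  have d1a2b : Disjoint R1a R2b := by
    rw [Set.disjoint_left]; rintro _ ⟨a, rfl⟩ ⟨b, hb⟩; simp [vA1, vB2] at hb
  have d1b2a : Disjoint R1b R2a := by
    rw [Set.disjoint_left]; rintro _ ⟨a, rfl⟩ ⟨b, hb⟩; simp [vB1, vA2] at hb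
  have d1b2b : Disjoint R1b R2b := by
    rw [Set.disjoint_left]; rintro _ ⟨a, rfl⟩ ⟨b, hb⟩; simp [vB1, vB2] at hb
  have d2a2b : Disjoint R2a R2b := by
    rw [Set.disjoint_left]; rintro _ ⟨a, rfl⟩ ⟨b, hb⟩; simp [vA2, vB2] at hb
  have hinl : Function.Injective (Sum.inl : V → Wt V k) := Sum.inl_injective
  constructor
  · -- forward direction
    rintro ⟨X, Y, hXY, hX, hY, hadj⟩
    have main : ∀ X Y : Set V, Disjoint X Y → X.ncard = k → Y.ncard = k →
        (∀ x ∈ X, ∀ y ∈ Y, G.Adj x y) → X ⊆ A → Y ⊆ B →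
        TJReachV (SpanBiclique G' k) (R1a ∪ R1b) (R2a ∪ R2b) := by
      intro X Y hXY hX hY hadj hXA hYB
      have hXf : X.Finite := Set.finite_of_ncard_ne_zero (by omega)
      have hYf : Y.Finite := Set.finite_of_ncard_ne_zero (by omega)
      set IX : Set (Wt V k) := Sum.inl '' X with hIX
      set IY : Set (Wt V k) := Sum.inl '' Y with hIY
      have hIXI : IX ⊆ I := by rw [hIX, hI]; exact Set.image_subset_range _ _
      have hIYI : IY ⊆ I := by rw [hIY, hI]; exact Set.image_subset_range _ _
      have hcIX : IX.ncard = k := by rw [hIX, Set.ncard_image_of_injective _ hinl, hX]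
      have hcIY : IY.ncard = k := by rw [hIY, Set.ncard_image_of_injective _ hinl, hY]
      have hfIX : IX.Finite := hXf.image _
      have hfIY : IY.Finite := hYf.image _
      have dIXIY : Disjoint IX IY := by
        rw [Set.disjoint_left]
        rintro _ ⟨x, hx, rfl⟩ ⟨y, hy, hxy⟩
        exact Set.disjoint_left.mp hXY hx (hinl hxy ▸ hy)
      have mkP : ∀ Z M : Set (Wt V k), Disjoint Z M → Z.ncard = k → M.ncard = k →
          (∀ z ∈ Z, ∀ m ∈ M, G'.Adj z m) → SpanBiclique G' k (Z ∪ M) :=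
        fun Z M h1 h2 h3 h4 => ⟨Z, M, h1, rfl, h2, h3, h4⟩
      have mkcard : ∀ (T T' U U' : Set (Wt V k)), Disjoint T T' → T.Finite → T'.Finite →
          U ⊆ T → U' ⊆ T' → (U ∪ U').ncard = U.ncard + U'.ncard := by
        intro T T' U U' hd hTf hT'f hU hU'
        exact Set.ncard_union_eq (hd.mono hU hU') (hTf.subset hU) (hT'f.subset hU')
      -- phase 1 : (R1b ∪ R1a) → (R1b ∪ IX)
      have ph1 : TJReachV (SpanBiclique G' k) (R1b ∪ R1a) (R1b ∪ IX) := by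
        refine tjreach_move _ k R1b R1a IX (dI1a.symm.mono_right hIXI) ?_ hfR1a hfIX hcR1a hcIX ?_
        · exact Set.disjoint_union_right.mpr ⟨d1a1b.symm, dI1b.symm.mono_right hIXI⟩
        · intro U U' hU hU' hc
          refine mkP _ _ ?_ hcR1b ?_ ?_
          · exact Set.disjoint_union_right.mpr
              ⟨(d1a1b.symm).mono_right hU, (dI1b.symm.mono_right hIXI).mono_right hU'⟩
          · rw [mkcard R1a IX U U' (dI1a.symm.mono_right hIXI) hfR1a hfIX hU hU', hc]
          · rintro _ ⟨b, rfl⟩ m hm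
            rcases hm with hm | hm
            · obtain ⟨a, rfl⟩ := hU hm
              exact adj_vB1_iff.mpr (Or.inl ⟨a, rfl⟩)
            · obtain ⟨x, hx, rfl⟩ := hU' hm
              exact adj_vB1_iff.mpr (Or.inr ⟨x, hXA hx, rfl⟩)
      -- phase 2 : (IX ∪ R1b) → (IX ∪ IY)
      have ph2 : TJReachV (SpanBiclique G' k) (IX ∪ R1b) (IX ∪ IY) := by
        refine tjreach_move _ k IX R1b IY (dI1b.symm.symm.mono_left hIYI).symm ?_ hfR1b hfIY hcR1b hcIY ?_
        · exact Set.disjoint_union_right.mpr ⟨(dI1b.mono_left hIXI), dIXIY⟩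
        · intro U U' hU hU' hc
          refine mkP _ _ ?_ hcIX ?_ ?_
          · exact Set.disjoint_union_right.mpr
              ⟨(dI1b.mono_left hIXI).mono_right hU, dIXIY.mono_right hU'⟩
          · rw [mkcard R1b IY U U' ((dI1b.symm.symm.mono_left hIYI).symm) hfR1b hfIY hU hU', hc]
          · rintro _ ⟨x, hx, rfl⟩ m hm
            rcases hm with hm | hm
            · obtain ⟨b, rfl⟩ := hU hm
              exact (adj_vB1_iff.mpr (Or.inr ⟨x, hXA hx, rfl⟩)).symm
            · obtain ⟨y, hy, rfl⟩ := hU' hm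
              exact adj_inl_inl_iff.mpr (hadj x hx y hy)
      -- phase 3 : (IY ∪ IX) → (IY ∪ R2a)
      have ph3 : TJReachV (SpanBiclique G' k) (IY ∪ IX) (IY ∪ R2a) := by
        refine tjreach_move _ k IY IX R2a (dI2a.mono_left hIXI) ?_ hfIX hfR2a hcIX hcR2a ?_
        · exact Set.disjoint_union_right.mpr ⟨dIXIY.symm, dI2a.mono_left hIYI⟩
        · intro U U' hU hU' hc
          refine mkP _ _ ?_ hcIY ?_ ?_
          · exact Set.disjoint_union_right.mpr
              ⟨dIXIY.symm.mono_right hU, (dI2a.mono_left hIYI).mono_right hU'⟩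
          · rw [mkcard IX R2a U U' (dI2a.mono_left hIXI) hfIX hfR2a hU hU', hc]
          · rintro _ ⟨y, hy, rfl⟩ m hm
            rcases hm with hm | hm
            · obtain ⟨x, hx, rfl⟩ := hU hm
              exact adj_inl_inl_iff.mpr (hadj x hx y hy).symm
            · obtain ⟨a, rfl⟩ := hU' hm
              exact (adj_vA2_iff.mpr (Or.inr ⟨y, hYB hy, rfl⟩)).symm
      -- phase 4 : (R2a ∪ IY) → (R2a ∪ R2b)
      have ph4 : TJReachV (SpanBiclique G' k) (R2a ∪ IY) (R2a ∪ R2b) := by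
        refine tjreach_move _ k R2a IY R2b (dI2b.mono_left hIYI) ?_ hfIY hfR2b hcIY hcR2b ?_
        · exact Set.disjoint_union_right.mpr ⟨(dI2a.mono_left hIYI).symm, d2a2b⟩
        · intro U U' hU hU' hc
          refine mkP _ _ ?_ hcR2a ?_ ?_
          · exact Set.disjoint_union_right.mpr
              ⟨(dI2a.mono_left hIYI).symm.mono_right hU, d2a2b.mono_right hU'⟩
          · rw [mkcard IY R2b U U' (dI2b.mono_left hIYI) hfIY hfR2b hU hU', hc]
          · rintro _ ⟨a, rfl⟩ m hm
            rcases hm with hm | hm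
            · obtain ⟨y, hy, rfl⟩ := hU hm
              exact adj_vA2_iff.mpr (Or.inr ⟨y, hYB hy, rfl⟩)
            · obtain ⟨b, rfl⟩ := hU' hm
              exact adj_vA2_iff.mpr (Or.inl ⟨b, rfl⟩)
      rw [Set.union_comm R1a R1b]
      rw [Set.union_comm IX R1b] at ph2
      rw [Set.union_comm IY IX] at ph3
      rw [Set.union_comm R2a IY] at ph4
      exact tjreach_trans _ ph1 (tjreach_trans _ ph2 (tjreach_trans _ ph3 ph4))
    obtain ⟨x0, hx0⟩ : X.Nonempty := Set.nonempty_of_ncard_ne_zero (by omega)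
    obtain ⟨y0, hy0⟩ : Y.Nonempty := Set.nonempty_of_ncard_ne_zero (by omega)
    rcases hbip x0 y0 (hadj x0 hx0 y0 hy0) with ⟨hxA, hyB⟩ | ⟨hxB, hyA⟩
    · refine main X Y hXY hX hY hadj ?_ ?_
      · intro x hx
        rcases hbip x y0 (hadj x hx y0 hy0) with ⟨h, -⟩ | ⟨-, h⟩
        · exact h
        · exact absurd hyB (Set.disjoint_left.mp hdisj h)
      · intro y hy
        rcases hbip x0 y (hadj x0 hx0 y hy) with ⟨-, h⟩ | ⟨h, -⟩
        · exact h
        · exact absurd h (Set.disjoint_left.mp hdisj hxA)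
    · refine main Y X hXY.symm hY hX (fun y hy x hx => (hadj x hx y hy).symm) ?_ ?_
      · intro y hy
        rcases hbip x0 y (hadj x0 hx0 y hy) with ⟨h, -⟩ | ⟨-, h⟩
        · exact absurd hxB (Set.disjoint_left.mp hdisj h)
        · exact h
      · intro x hx
        rcases hbip x y0 (hadj x hx y0 hy0) with ⟨-, h⟩ | ⟨h, -⟩
        · exact absurd h (Set.disjoint_left.mp hdisj hyA)
        · exact h
  · -- backward direction
    rintro ⟨l, f, h0, hl, hP, hs⟩
    have hQl : f l ∩ (R1a ∪ R1b) = ∅ ∧ l ≤ l := by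
      refine ⟨?_, le_rfl⟩
      rw [hl]
      apply Set.eq_empty_iff_forall_notMem.mpr
      rintro w ⟨(⟨a, rfl⟩ | ⟨b, rfl⟩), hw2⟩ <;>
        rcases hw2 with ⟨c, hc⟩ | ⟨c, hc⟩ <;> simp [vA1, vB1, vA2, vB2] at hc
    have hexQ : ∃ t, f t ∩ (R1a ∪ R1b) = ∅ ∧ t ≤ l := ⟨l, hQl⟩
    set t := Nat.find hexQ with hts
    obtain ⟨hQt, htl⟩ := Nat.find_spec hexQ
    have ht0 : t ≠ 0 := by
      intro h
      have : vA1 (⟨0, hk⟩ : Fin k) ∈ f t ∩ (R1a ∪ R1b) := by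
        rw [h, h0]
        exact ⟨Or.inl ⟨_, rfl⟩, Or.inl ⟨_, rfl⟩⟩
      rw [hQt] at this
      exact this
    have hprev : ¬(f (t - 1) ∩ (R1a ∪ R1b) = ∅ ∧ t - 1 ≤ l) := Nat.find_min hexQ (by omega)
    have hWne : (f (t - 1) ∩ (R1a ∪ R1b)).Nonempty := by
      rw [Set.nonempty_iff_ne_empty]
      intro h
      exact hprev ⟨h, by omega⟩
    obtain ⟨z, hzW, hzR⟩ := hWne
    have hstep : TJStepV (f (t - 1)) (f t) := by
      have := hs (t - 1) (by omega)
      rwa [Nat.sub_add_cancel (by omega)] at this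
    obtain ⟨u', v', hu'W, hv'W, hW'⟩ := hstep
    set W := f (t - 1) with hWs
    set W' := f t with hW's
    have hQt' : ∀ w ∈ W', w ∉ R1a ∪ R1b := by
      intro w hw hw2
      have : w ∈ W' ∩ (R1a ∪ R1b) := ⟨hw, hw2⟩
      rw [hQt] at this
      exact this
    have hsubW : ∀ w, w ∈ W → w ∈ R1a ∪ R1b → w = u' := by
      intro w hw hwR
      by_contra hne'
      exact hQt' w (hW' ▸ Or.inl ⟨hw, hne'⟩) hwR
    have hu'R : u' ∈ R1a ∪ R1b := (hsubW z hzW hzR) ▸ hzR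
    have hPW : SpanBiclique G' k W := hP (t - 1) (by omega)
    have hPW' : SpanBiclique G' k W' := hP t htl
    -- u' is in B1
    have hu'B1 : ∃ b0, vB1 b0 = u' := by
      rcases hu'R with ⟨a, ha⟩ | ⟨b, hb⟩
      · exfalso
        obtain ⟨X, Y, hdXY, huXY, hXk, hYk, hadjXY, hu'X⟩ := spanb_elim hPW hu'W
        have hYsub : Y ⊆ R1b := by
          intro y hy
          have := hadjXY u' hu'X y hy
          rw [← ha, adj_vA1_iff] at this
          obtain ⟨b, rfl⟩ := this
          exact ⟨b, rfl⟩
        have hYeq : Y = R1b := Set.eq_of_subset_of_ncard_le hYsub (by omega) hfR1b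
        have hb0W : vB1 (⟨0, hk⟩ : Fin k) ∈ W := by
          rw [← huXY]
          exact Or.inr (hYeq ▸ (⟨_, rfl⟩ : vB1 (⟨0, hk⟩ : Fin k) ∈ R1b))
        have := hsubW _ hb0W (Or.inr ⟨_, rfl⟩)
        rw [← ha] at this
        simp [vA1, vB1] at this
      · exact ⟨b, hb⟩
    obtain ⟨b0, hb0⟩ := hu'B1
    obtain ⟨X, Y, hdXY, huXY, hXk, hYk, hadjXY, hu'X⟩ := spanb_elim hPW hu'W
    have hXf : X.Finite := Set.finite_of_ncard_ne_zero (by omega)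
    have hYA : Y ⊆ Sum.inl '' A := by
      intro y hy
      have hA := hadjXY u' hu'X y hy
      rw [← hb0, adj_vB1_iff] at hA
      rcases hA with ⟨a, rfl⟩ | ⟨u, huA, rfl⟩
      · exfalso
        have hyW : vA1 a ∈ W := by rw [← huXY]; exact Or.inr hy
        have := hsubW _ hyW (Or.inl ⟨a, rfl⟩)
        rw [← hb0] at this
        simp [vA1, vB1] at this
      · exact ⟨u, huA, rfl⟩
    obtain ⟨y1, hy1⟩ : Y.Nonempty := Set.nonempty_of_ncard_ne_zero (by omega)
    obtain ⟨w1, hw1A, hw1⟩ := hYA hy1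
    have hXI : ∀ x ∈ X, x ≠ u' → x ∈ I := by
      intro x hxX hxu
      have hxW : x ∈ W := by rw [← huXY]; exact Or.inl hxX
      rcases x with u | ((a | b) | (a | b))
      · exact ⟨u, rfl⟩
      · exact absurd (hsubW _ hxW (Or.inl ⟨a, rfl⟩)) hxu
      · exact absurd (hsubW _ hxW (Or.inr ⟨b, rfl⟩)) hxu
      · exfalso
        have := hadjXY _ hxX y1 hy1
        rw [show (Sum.inr (Sum.inr (Sum.inl a)) : Wt V k) = vA2 a from rfl, adj_vA2_iff] at this
        rcases this with ⟨b, hb⟩ | ⟨u, huB, hu⟩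
        · rw [← hw1] at hb; simp [vB2] at hb
        · rw [← hw1] at hu
          have : w1 = u := by simpa using hu
          exact Set.disjoint_left.mp hdisj hw1A (this ▸ huB)
      · exfalso
        have := hadjXY _ hxX y1 hy1
        rw [show (Sum.inr (Sum.inr (Sum.inr b)) : Wt V k) = vB2 b from rfl, adj_vB2_iff] at this
        obtain ⟨a, ha⟩ := this
        rw [← hw1] at ha; simp [vA2] at ha
    have hW'sub : W' ⊆ I ∪ {v'} := by
      rw [hW']
      rintro w (⟨hwW, hwu⟩ | hwv)
      · have hwu' : w ≠ u' := by simpa using hwu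
        have : w ∈ X ∪ Y := by rw [huXY]; exact hwW
        rcases this with hwX | hwY
        · exact Or.inl (hXI w hwX hwu')
        · obtain ⟨u, -, rfl⟩ := hYA hwY
          exact Or.inl ⟨u, rfl⟩
      · exact Or.inr hwv
    have hv'W' : v' ∈ W' := by rw [hW']; exact Or.inr rfl
    -- v' must be an inl vertex
    have hv'I : v' ∈ I := by
      rcases hv' : v' with u | ((a | b) | (a | b))
      · exact ⟨u, rfl⟩
      · exact absurd (Or.inl ⟨a, rfl⟩) (hv' ▸ hQt' v' hv'W')
      · exact absurd (Or.inr ⟨b, rfl⟩) (hv' ▸ hQt' v' hv'W')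
      · -- v' = vA2 a : contradiction
        exfalso
        subst hv'
        obtain ⟨X₂, Y₂, hd2, hu2, hX2, hY2, hadj2, hv'X2⟩ := spanb_elim hPW' hv'W'
        have hY2sub : Y₂ ⊆ X \ {u'} := by
          intro y hy
          have hA := hadj2 _ hv'X2 y hy
          rw [show (Sum.inr (Sum.inr (Sum.inl a)) : Wt V k) = vA2 a from rfl,
            adj_vA2_iff] at hA
          have hyW' : y ∈ W' := by rw [← hu2]; exact Or.inr hy
          rcases hA with ⟨b, rfl⟩ | ⟨u, huB, rfl⟩
          · exfalso
            rcases hW'sub hyW' with ⟨w, hw⟩ | hw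
            · simp [vB2] at hw
            · rw [Set.mem_singleton_iff] at hw
              simp [vA2, vB2] at hw
          · have hyW : Sum.inl u ∈ W \ {u'} ∨ (Sum.inl u : Wt V k) = Sum.inr (Sum.inr (Sum.inl a)) := by
              rw [hW'] at hyW'
              rcases hyW' with h | h
              · exact Or.inl h
              · exact Or.inr h
            rcases hyW with ⟨hyW, hyu⟩ | h
            · have : Sum.inl u ∈ X ∪ Y := by rw [huXY]; exact hyW
              rcases this with h | h
              · exact ⟨h, hyu⟩
              · exfalso
                obtain ⟨w, hwA, hw⟩ := hYA h
                have : w = u := by simpa using hw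
                exact Set.disjoint_left.mp hdisj hwA (this ▸ huB)
            · exact absurd h (by simp)
        have hcard : k ≤ X.ncard - 1 := by
          have h1 : (X \ {u'}).ncard = X.ncard - 1 :=
            Set.ncard_diff_singleton_of_mem hu'X
          have h2 : Y₂.ncard ≤ (X \ {u'}).ncard :=
            Set.ncard_le_ncard hY2sub (hXf.diff)
          omega
        omega
      · -- v' = vB2 b : contradiction
        exfalso
        subst hv'
        obtain ⟨X₂, Y₂, hd2, hu2, hX2, hY2, hadj2, hv'X2⟩ := spanb_elim hPW' hv'W'
        obtain ⟨y2, hy2⟩ : Y₂.Nonempty := Set.nonempty_of_ncard_ne_zero (by omega)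
        have hA := hadj2 _ hv'X2 y2 hy2
        rw [show (Sum.inr (Sum.inr (Sum.inr b)) : Wt V k) = vB2 b from rfl,
          adj_vB2_iff] at hA
        obtain ⟨a, rfl⟩ := hA
        have hyW' : vA2 a ∈ W' := by rw [← hu2]; exact Or.inr hy2
        rcases hW'sub hyW' with ⟨w, hw⟩ | hw
        · simp [vA2] at hw
        · rw [Set.mem_singleton_iff] at hw
          simp [vA2, vB2] at hw
    -- all of W' lies in I, extract the biclique of G
    have hW'I : W' ⊆ I := by
      intro w hw
      rcases hW'sub hw with h | h
      · exact h
      · rw [Set.mem_singleton_iff] at h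
        exact h ▸ hv'I
    obtain ⟨X₂, Y₂, hd2, hu2, hX2, hY2, hadj2⟩ := hPW'
    have hX2I : X₂ ⊆ I := fun w hw => hW'I (by rw [← hu2]; exact Or.inl hw)
    have hY2I : Y₂ ⊆ I := fun w hw => hW'I (by rw [← hu2]; exact Or.inr hw)
    have hX2eq : Sum.inl '' (Sum.inl ⁻¹' X₂) = X₂ := Set.image_preimage_eq_of_subset hX2I
    have hY2eq : Sum.inl '' (Sum.inl ⁻¹' Y₂) = Y₂ := Set.image_preimage_eq_of_subset hY2I
    refine ⟨Sum.inl ⁻¹' X₂, Sum.inl ⁻¹' Y₂, ?_, ?_, ?_, ?_⟩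
    · rw [Set.disjoint_left]
      intro u hu1 hu2'
      exact Set.disjoint_left.mp hd2 hu1 hu2'
    · rw [← Set.ncard_image_of_injective _ hinl, hX2eq, hX2]
    · rw [← Set.ncard_image_of_injective _ hinl, hY2eq, hY2]
    · intro x hx y hy
      exact adj_inl_inl_iff.mp (hadj2 _ hx _ hy)
end Stmt18
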